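/- Let f : R^p × R^q → R be continuous, suppose that for every x ∈ R^p the function u ↦ f(x, u) is differentiable, and suppose that (x, u) ↦ ∇_u f(x, u) is continuous on R^p × R^q. Let C ⊆ R^p be a nonempty compact set and define the value function v(u) := min over x ∈ C of f(x, u). If for some u₀ ∈ R^q the function x ↦ f(x, u₀) has a unique minimizer x₀ on C, then v is differentiable at u₀ and ∇v(u₀) = ∇_u f(x₀, u₀). -/

import Mathlib

open Filter Metric

/-- Danskin-type theorem: let `f : ℝ^p × ℝ^q → ℝ` be continuous, differentiable in the
second argument with jointly continuous partial derivative, `C ⊆ ℝ^p` nonempty compact,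
and `v(u) := min_{x ∈ C} f(x, u)`. If `x₀` is the unique minimizer of `f(·, u₀)` on `C`,
then `v` is differentiable at `u₀` with derivative `∇_u f(x₀, u₀)`. -/
theorem stmt_15 (p q : ℕ) (f : (Fin p → ℝ) → (Fin q → ℝ) → ℝ)
    (hcont : Continuous fun xu : (Fin p → ℝ) × (Fin q → ℝ) => f xu.1 xu.2)
    (hdiff : ∀ x, Differentiable ℝ (f x))
    (hdcont : Continuous fun xu : (Fin p → ℝ) × (Fin q → ℝ) => fderiv ℝ (f xu.1) xu.2)
    (C : Set (Fin p → ℝ)) (hCcomp : IsCompact C) (hCne : C.Nonempty)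
    (v : (Fin q → ℝ) → ℝ)
    (hv : ∀ u, v u = sInf ((fun x => f x u) '' C))
    (u₀ : Fin q → ℝ) (x₀ : Fin p → ℝ) (hx₀ : x₀ ∈ C)
    (hmin : ∀ x ∈ C, f x₀ u₀ ≤ f x u₀)
    (huniq : ∀ x ∈ C, f x u₀ = f x₀ u₀ → x = x₀) :
    HasFDerivAt v (fderiv ℝ (f x₀) u₀) u₀ := by
  set D := fderiv ℝ (f x₀) u₀ with hDdef
  -- continuity of f x u in x for fixed u
  have hcx : ∀ u : Fin q → ℝ, Continuous fun x => f x u := fun u =>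
    hcont.comp (continuous_id.prodMk continuous_const)
  -- v attains its minimum
  have hval : ∀ u, ∃ x ∈ C, v u = f x u ∧ ∀ y ∈ C, f x u ≤ f y u := by
    intro u
    obtain ⟨x, hxC, hxmin⟩ := hCcomp.exists_isMinOn hCne (hcx u).continuousOn
    refine ⟨x, hxC, ?_, fun y hy => hxmin hy⟩
    rw [hv]
    have hle : IsLeast ((fun x => f x u) '' C) (f x u) :=
      ⟨⟨x, hxC, rfl⟩, by rintro _ ⟨y, hy, rfl⟩; exact hxmin hy⟩
    exact hle.csInf_eq
  have hv0 : v u₀ = f x₀ u₀ := by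
    rw [hv]
    have hle : IsLeast ((fun x => f x u₀) '' C) (f x₀ u₀) :=
      ⟨⟨x₀, hx₀, rfl⟩, by rintro _ ⟨y, hy, rfl⟩; exact hmin y hy⟩
    exact hle.csInf_eq
  -- MVT bound
  have hMVT : ∀ (ε : ℝ) (x : Fin p → ℝ) (r : ℝ) (u : Fin q → ℝ), u ∈ ball u₀ r →
      (∀ ξ ∈ ball u₀ r, ‖fderiv ℝ (f x) ξ - D‖ ≤ ε) →
      ‖f x u - f x u₀ - D (u - u₀)‖ ≤ ε * ‖u - u₀‖ := by
    intro ε x r u hu hbd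
    have hr : (0:ℝ) < r := by
      rcases Metric.mem_ball.mp hu with h
      exact lt_of_le_of_lt dist_nonneg h
    have hu₀ : u₀ ∈ ball u₀ r := mem_ball_self hr
    have hg : ∀ w ∈ ball u₀ r, DifferentiableAt ℝ (fun w => f x w - D w) w := fun w _ =>
      (hdiff x w).sub (D.differentiableAt)
    have hgd : ∀ w ∈ ball u₀ r, ‖fderiv ℝ (fun w => f x w - D w) w‖ ≤ ε := by
      intro w hw
      have : fderiv ℝ (fun w => f x w - D w) w = fderiv ℝ (f x) w - D :=
        ((hdiff x w).hasFDerivAt.sub D.hasFDerivAt).fderiv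
      rw [this]
      exact hbd w hw
    have := (convex_ball u₀ r).norm_image_sub_le_of_norm_fderiv_le hg hgd hu₀ hu
    have heq : f x u - D u - (f x u₀ - D u₀) = f x u - f x u₀ - D (u - u₀) := by
      simp [map_sub]; ring
    rwa [heq] at this
  rw [hasFDerivAt_iff_isLittleO, Asymptotics.isLittleO_iff]
  intro ε hε
  -- Step B: choose δ₁
  have hB := Metric.continuousAt_iff.mp (hdcont.continuousAt (x := (x₀, u₀)))
  obtain ⟨δ₁, hδ₁pos, hδ₁⟩ := hB ε hε
  -- Step C: minimizer localization for δ := δ₁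
  have hC : ∃ η > 0, ∀ u, dist u u₀ < η → ∀ x ∈ C, (∀ y ∈ C, f x u ≤ f y u) →
      dist x x₀ < δ₁ := by
    set K := {x ∈ C | δ₁ ≤ dist x x₀} with hK
    by_cases hKne : K.Nonempty
    · have hKcomp : IsCompact K := hCcomp.inter_right
        (isClosed_le continuous_const ((continuous_id.dist continuous_const)))
      obtain ⟨z, hzK, hzmin⟩ := hKcomp.exists_isMinOn hKne (hcx u₀).continuousOn
      have hzC : z ∈ C := hzK.1
      have hzne : z ≠ x₀ := by
        intro h
        have := hzK.2
        rw [h] at this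
        simp at this
        exact absurd this (not_le.mpr hδ₁pos)
      have hzgt : f x₀ u₀ < f z u₀ :=
        lt_of_le_of_ne (hmin z hzC) (fun h => hzne (huniq z hzC h.symm))
      set γ := f z u₀ - f x₀ u₀ with hγ
      have hγpos : 0 < γ := sub_pos.mpr hzgt
      -- tube lemma
      set n := {xu : (Fin p → ℝ) × (Fin q → ℝ) | |f xu.1 xu.2 - f xu.1 u₀| < γ/3} with hn
      have hnopen : IsOpen n := by
        have : Continuous fun xu : (Fin p → ℝ) × (Fin q → ℝ) => f xu.1 xu.2 - f xu.1 u₀ :=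
          hcont.sub (hcont.comp (continuous_fst.prodMk continuous_const))
        exact isOpen_lt (g := fun _ => γ/3) this.abs continuous_const
      have hsub : C ×ˢ ({u₀} : Set (Fin q → ℝ)) ⊆ n := by
        rintro ⟨x, u⟩ ⟨hx, hu⟩
        simp only [Set.mem_singleton_iff] at hu
        subst hu
        simp only [hn, Set.mem_setOf_eq, sub_self, abs_zero]
        positivity
      obtain ⟨U, V, hUopen, hVopen, hCU, hu₀V, hUV⟩ :=
        generalized_tube_lemma hCcomp isCompact_singleton hnopen hsub
      obtain ⟨η, hηpos, hηV⟩ := Metric.isOpen_iff.mp hVopen u₀ (hu₀V rfl)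
      refine ⟨η, hηpos, ?_⟩
      intro u hu x hxC hxmin
      by_contra hfar
      push_neg at hfar
      have hxK : x ∈ K := ⟨hxC, hfar⟩
      have huV : u ∈ V := hηV (Metric.mem_ball.mpr hu)
      have h1 : ((x, u) : _ × _) ∈ n := hUV (Set.mk_mem_prod (hCU hxC) huV)
      have h2 : ((x₀, u) : _ × _) ∈ n := hUV (Set.mk_mem_prod (hCU hx₀) huV)
      simp only [hn, Set.mem_setOf_eq] at h1 h2
      have h3 : f z u₀ ≤ f x u₀ := hzmin hxK
      have h4 : f x u ≤ f x₀ u := hxmin x₀ hx₀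
      have h1' := abs_lt.mp h1
      have h2' := abs_lt.mp h2
      linarith [h1'.1, h2'.2]
    · refine ⟨1, one_pos, ?_⟩
      intro u hu x hxC hxmin
      by_contra hfar
      push_neg at hfar
      exact hKne ⟨x, hxC, hfar⟩
  obtain ⟨η, hηpos, hη⟩ := hC
  -- final: events in 𝓝 u₀
  have hr : (0:ℝ) < min η δ₁ := lt_min hηpos hδ₁pos
  filter_upwards [Metric.ball_mem_nhds u₀ hr] with u hu
  have huη : dist u u₀ < η := lt_of_lt_of_le (Metric.mem_ball.mp hu) (min_le_left _ _)
  have huball : u ∈ ball u₀ (min η δ₁) := hu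
  -- derivative bound helper
  have hbd : ∀ x : Fin p → ℝ, dist x x₀ < δ₁ → ∀ ξ ∈ ball u₀ (min η δ₁),
      ‖fderiv ℝ (f x) ξ - D‖ ≤ ε := by
    intro x hx ξ hξ
    have hξd : dist ξ u₀ < δ₁ := lt_of_lt_of_le (Metric.mem_ball.mp hξ) (min_le_right _ _)
    have : dist ((x, ξ) : _ × _) (x₀, u₀) < δ₁ := by
      rw [Prod.dist_eq]
      exact max_lt hx hξd
    have := hδ₁ this
    rw [dist_eq_norm] at this
    exact le_of_lt this
  obtain ⟨xu, hxuC, hvu, hxumin⟩ := hval u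
  have hxuclose : dist xu x₀ < δ₁ := hη u huη xu hxuC hxumin
  have hA : ‖f x₀ u - f x₀ u₀ - D (u - u₀)‖ ≤ ε * ‖u - u₀‖ :=
    hMVT ε x₀ _ u huball (hbd x₀ (by simp [hδ₁pos]))
  have hBB : ‖f xu u - f xu u₀ - D (u - u₀)‖ ≤ ε * ‖u - u₀‖ :=
    hMVT ε xu _ u huball (hbd xu hxuclose)
  have hup : v u ≤ f x₀ u := by
    rw [hvu]; exact hxumin x₀ hx₀
  have hlo : v u₀ ≤ f xu u₀ := by
    rw [hv0]; exact hmin xu hxuC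
  rw [Real.norm_eq_abs, abs_le]
  rw [Real.norm_eq_abs, abs_le] at hA hBB
  constructor
  · have := hBB.1
    rw [hvu]
    linarith
  · rw [hvu, hv0]
    linarith [hA.2, hup]
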